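/- Let (M, τ) be a tracial von Neumann algebra and x ∈ M with ‖x‖ ≤ 1. If 1 − Re(x) has an L² formal inverse, then so does 1 − x. In particular, if xξ = ξ for some ξ ∈ L²(M,τ) then x*ξ = ξ and Re(x)ξ = ξ, so injectivity of 1 − Re(x) implies injectivity of 1 − x. -/

import Mathlib

set_option maxHeartbeats 1000000

open scoped InnerProductSpace

section AuxiliaryLemmas

open ContinuousLinearMap

variable {H : Type*} [NormedAddCommGroup H] [InnerProductSpace ℂ H] [CompleteSpace H]

lemma centralizer_isClosed (s : Set (H →L[ℂ] H)) : IsClosed (Set.centralizer s) := by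
  have : Set.centralizer s = ⋂ g ∈ s, {z : H →L[ℂ] H | g * z = z * g} := by
    ext z; simp [Set.mem_centralizer_iff]
  rw [this]
  exact isClosed_biInter fun g _ => isClosed_eq (continuous_const.mul continuous_id)
    (continuous_id.mul continuous_const)

lemma vna_isClosed (S : VonNeumannAlgebra H) : IsClosed (S : Set (H →L[ℂ] H)) := by
  have h : (S : Set (H →L[ℂ] H)) = Set.centralizer (Set.centralizer (S : Set (H →L[ℂ] H))) :=
    S.centralizer_centralizer.symm
  rw [h]; exact centralizer_isClosed _

lemma tsum_geom_mem (S : VonNeumannAlgebra H) {t : H →L[ℂ] H} (ht : t ∈ S) (h : ‖t‖ < 1) :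
    (∑' n : ℕ, t ^ n) ∈ S := by
  have hs : HasSum (fun n : ℕ => t ^ n) (∑' n : ℕ, t ^ n) :=
    (summable_geometric_of_norm_lt_one h).hasSum
  exact (vna_isClosed S).mem_of_tendsto hs
    (Filter.Eventually.of_forall fun s => sum_mem fun i _ => pow_mem ht i)


lemma vna_smul_mem (S : VonNeumannAlgebra H) {a : H →L[ℂ] H} (ha : a ∈ S) (c : ℂ) :
    c • a ∈ S := by
  rw [Algebra.smul_def]
  exact mul_mem (S.toStarSubalgebra.algebraMap_mem c) ha

lemma iter_diff (k a b : H →L[ℂ] H) :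
    (2:ℂ)⁻¹ • (k + a * a) - (2:ℂ)⁻¹ • (k + b * b)
      = (2:ℂ)⁻¹ • (a * (a - b) + (a - b) * b) := by
  rw [← smul_sub]; congr 1; noncomm_ring

lemma exists_sqrt (S : VonNeumannAlgebra H)
    (k : H →L[ℂ] H) (hkS : k ∈ S) (hks : star k = k)
    {q : ℝ} (hq0 : 0 ≤ q) (hq : q < 1) (hk : ‖k‖ ≤ q) :
    ∃ W : H →L[ℂ] H, W ∈ S ∧ star W = W ∧ W * W = 1 - k ∧ ‖1 - W‖ < 1 := by
  classical
  have hSclosed : IsClosed (S : Set (H →L[ℂ] H)) := vna_isClosed S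
  set σ : ℝ := 1 - Real.sqrt (1 - q) with hσdef
  have h1q : (0:ℝ) < 1 - q := by linarith
  have hsq_pos : 0 < Real.sqrt (1 - q) := Real.sqrt_pos.2 h1q
  have hsq_le : Real.sqrt (1 - q) ≤ 1 := by
    have h := Real.sqrt_le_sqrt (show (1:ℝ) - q ≤ 1 by linarith)
    simpa using h
  have hσ0 : 0 ≤ σ := by rw [hσdef]; linarith
  have hσ1 : σ < 1 := by rw [hσdef]; linarith
  have hkey : q + σ * σ = 2 * σ := by
    have h := Real.mul_self_sqrt (le_of_lt h1q)
    rw [hσdef]; nlinarith [h]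
  set s : ℕ → (H →L[ℂ] H) := fun n => Nat.rec (0 : H →L[ℂ] H)
    (fun _ p => (2:ℂ)⁻¹ • (k + p * p)) n with hsdef
  have hs0 : s 0 = 0 := rfl
  have hsstep : ∀ n, s (n+1) = (2:ℂ)⁻¹ • (k + s n * s n) := fun n => rfl
  have hhalf : ‖(2:ℂ)⁻¹‖ = (2:ℝ)⁻¹ := by rw [norm_inv]; norm_num
  have hbound : ∀ n, ‖s n‖ ≤ σ := by
    intro n; induction n with
    | zero => simpa [hs0] using hσ0
    | succ n ih =>
      rw [hsstep]
      calc ‖(2:ℂ)⁻¹ • (k + s n * s n)‖ = (2:ℝ)⁻¹ * ‖k + s n * s n‖ := by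
            rw [norm_smul, hhalf]
        _ ≤ (2:ℝ)⁻¹ * (q + σ * σ) := by
            have h2 : ‖s n * s n‖ ≤ σ * σ :=
              le_trans (norm_mul_le _ _) (mul_le_mul ih ih (norm_nonneg _) hσ0)
            have h3 := norm_add_le k (s n * s n)
            gcongr
            linarith
        _ = σ := by rw [hkey]; ring
  have hmem : ∀ n, s n ∈ S := by
    intro n; induction n with
    | zero => rw [hs0]; exact zero_mem S.toStarSubalgebra
    | succ n ih =>
      rw [hsstep]
      exact vna_smul_mem S (add_mem hkS (mul_mem ih ih)) _
  have hstar : ∀ n, star (s n) = s n := by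
    intro n; induction n with
    | zero => rw [hs0]; simp
    | succ n ih =>
      rw [hsstep, star_smul, star_add, star_mul, ih, hks]
      norm_num
  have hdiff : ∀ n, ‖s (n+1) - s n‖ ≤ ‖s 1 - s 0‖ * σ ^ n := by
    intro n; induction n with
    | zero => simp
    | succ n ih =>
      calc ‖s (n+2) - s (n+1)‖
          = ‖(2:ℂ)⁻¹ • (k + s (n+1) * s (n+1)) - (2:ℂ)⁻¹ • (k + s n * s n)‖ := by
            rw [← hsstep n, ← hsstep (n+1)]
        _ = ‖(2:ℂ)⁻¹ • (s (n+1) * (s (n+1) - s n) + (s (n+1) - s n) * s n)‖ := by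
            rw [iter_diff]
        _ = (2:ℝ)⁻¹ * ‖s (n+1) * (s (n+1) - s n) + (s (n+1) - s n) * s n‖ := by
            rw [norm_smul, hhalf]
        _ ≤ (2:ℝ)⁻¹ * (σ * ‖s (n+1) - s n‖ + ‖s (n+1) - s n‖ * σ) := by
            have h1 : ‖s (n+1) * (s (n+1) - s n)‖ ≤ σ * ‖s (n+1) - s n‖ :=
              le_trans (norm_mul_le _ _) (by gcongr; exact hbound (n+1))
            have h2 : ‖(s (n+1) - s n) * s n‖ ≤ ‖s (n+1) - s n‖ * σ :=
              le_trans (norm_mul_le _ _) (by gcongr; exact hbound n)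
            have h3 := norm_add_le (s (n+1) * (s (n+1) - s n)) ((s (n+1) - s n) * s n)
            gcongr
            linarith
        _ = σ * ‖s (n+1) - s n‖ := by ring
        _ ≤ σ * (‖s 1 - s 0‖ * σ ^ n) := by gcongr
        _ = ‖s 1 - s 0‖ * σ ^ (n+1) := by ring
  have hcauchy : CauchySeq s := by
    apply cauchySeq_of_le_geometric σ ‖s 1 - s 0‖ hσ1
    intro n
    rw [dist_eq_norm, norm_sub_rev]
    exact hdiff n
  obtain ⟨w, hw⟩ := cauchySeq_tendsto_of_complete hcauchy
  have hwmem : w ∈ S := hSclosed.mem_of_tendsto hw (Filter.Eventually.of_forall hmem)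
  have hwstar : star w = w := by
    have h1 : Filter.Tendsto (fun n => star (s n)) Filter.atTop (nhds (star w)) := hw.star
    have h2 : (fun n => star (s n)) = s := funext hstar
    rw [h2] at h1
    exact tendsto_nhds_unique h1 hw
  have hwnorm : ‖w‖ ≤ σ := le_of_tendsto hw.norm (Filter.Eventually.of_forall hbound)
  have hweq : w = (2:ℂ)⁻¹ • (k + w * w) := by
    have h1 : Filter.Tendsto (fun n => s (n+1)) Filter.atTop (nhds w) :=
      hw.comp (Filter.tendsto_add_atTop_nat 1)
    have h2 : Filter.Tendsto (fun n => (2:ℂ)⁻¹ • (k + s n * s n)) Filter.atTop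
        (nhds ((2:ℂ)⁻¹ • (k + w * w))) := ((hw.mul hw).const_add k).const_smul _
    have h3 : (fun n => s (n+1)) = fun n => (2:ℂ)⁻¹ • (k + s n * s n) := funext hsstep
    rw [h3] at h1
    exact tendsto_nhds_unique h1 h2
  have h2w : w + w = k + w * w := by
    have h2 : (2:ℂ) • w = k + w * w := by
      conv_lhs => rw [hweq]
      rw [smul_smul]
      norm_num
    rw [← h2, two_smul]
  refine ⟨1 - w, sub_mem (one_mem S.toStarSubalgebra) hwmem, by
      rw [star_sub, hwstar, star_one], ?_, ?_⟩
  · calc (1 - w) * (1 - w) = 1 - (w + w) + w * w := by noncomm_ring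
      _ = 1 - k := by rw [h2w]; abel
  · have h4 : (1:H →L[ℂ] H) - (1 - w) = w := by abel
    rw [h4]
    exact lt_of_le_of_lt hwnorm hσ1

lemma inner_star_left (a : H →L[ℂ] H) (p q : H) :
    (inner ℂ ((star a) p) q : ℂ) = inner ℂ p (a q) := by
  rw [ContinuousLinearMap.star_eq_adjoint]
  exact ContinuousLinearMap.adjoint_inner_left a q p

lemma inner_move (c : H →L[ℂ] H) (hc : star c = c) (p q : H) :
    (inner ℂ (c p) q : ℂ) = inner ℂ p (c q) := by
  conv_lhs => rw [← hc]
  exact inner_star_left c p q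

lemma inner_move' (a : H →L[ℂ] H) (p q : H) :
    (inner ℂ (a p) q : ℂ) = inner ℂ p ((star a) q) := by
  rw [ContinuousLinearMap.star_eq_adjoint]
  exact (ContinuousLinearMap.adjoint_inner_right a p q).symm

lemma exists_preimage_of_bound (T : H →L[ℂ] H) (Ω : H) (C : ℝ)
    (hb : ∀ v : H, ‖(inner ℂ Ω v : ℂ)‖ ≤ C * ‖T v‖) :
    ∃ ξ : H, ∀ v : H, (inner ℂ ξ (T v) : ℂ) = inner ℂ Ω v := by
  classical
  have wd : ∀ v v' : H, T v = T v' → (inner ℂ Ω v : ℂ) = inner ℂ Ω v' := by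
    intro v v' h
    have h1 : ‖(inner ℂ Ω (v - v') : ℂ)‖ ≤ C * ‖T (v - v')‖ := hb _
    rw [map_sub, h, sub_self, norm_zero, mul_zero] at h1
    have h2 : (inner ℂ Ω (v - v') : ℂ) = 0 := norm_le_zero_iff.mp h1
    rw [inner_sub_right, sub_eq_zero] at h2
    exact h2
  set R : Submodule ℂ H := LinearMap.range (T : H →ₗ[ℂ] H) with hRdef
  have memR : ∀ v : H, T v ∈ R := fun v => LinearMap.mem_range.mpr ⟨v, rfl⟩
  have hex : ∀ w : R, ∃ v : H, T v = (w : H) := fun w => LinearMap.mem_range.mp w.2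
  set pre : R → H := fun w => (hex w).choose with hpredef
  have hpre : ∀ w : R, T (pre w) = (w : H) := fun w => (hex w).choose_spec
  set f0 : R →ₗ[ℂ] ℂ :=
    { toFun := fun w => inner ℂ Ω (pre w)
      map_add' := by
        intro w w'
        show (inner ℂ Ω (pre (w + w')) : ℂ) = inner ℂ Ω (pre w) + inner ℂ Ω (pre w')
        have h1 : T (pre (w + w')) = T (pre w + pre w') := by
          rw [map_add, hpre, hpre, hpre]; rfl
        rw [wd _ _ h1, inner_add_right]
      map_smul' := by
        intro c w
        show (inner ℂ Ω (pre (c • w)) : ℂ) = c * inner ℂ Ω (pre w)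
        have h1 : T (pre (c • w)) = T (c • pre w) := by
          rw [map_smul, hpre, hpre]; rfl
        rw [wd _ _ h1, inner_smul_right] } with hf0def
  have hf0bound : ∀ w : R, ‖f0 w‖ ≤ C * ‖w‖ := by
    intro w
    have h1 : ‖(inner ℂ Ω (pre w) : ℂ)‖ ≤ C * ‖T (pre w)‖ := hb _
    rw [hpre] at h1
    exact h1
  set f : R →L[ℂ] ℂ := LinearMap.mkContinuous f0 C hf0bound with hfdef
  obtain ⟨g, hg, -⟩ := exists_extension_norm_eq R f
  refine ⟨(InnerProductSpace.toDual ℂ H).symm g, ?_⟩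
  intro v
  have h1 : (inner ℂ ((InnerProductSpace.toDual ℂ H).symm g) (T v) : ℂ) = g (T v) :=
    InnerProductSpace.toDual_symm_apply
  rw [h1]
  have h2 : T v = ((⟨T v, memR v⟩ : R) : H) := rfl
  rw [h2, hg ⟨T v, memR v⟩]
  have h3 : f (⟨T v, memR v⟩ : R) = inner ℂ Ω (pre ⟨T v, memR v⟩) := rfl
  rw [h3]
  exact wd _ _ (by rw [hpre])

lemma fixed_adjoint (x : H →L[ℂ] H) (hnorm : ‖x‖ ≤ 1) (ξ : H) (hξ : x ξ = ξ) :
    (ContinuousLinearMap.adjoint x) ξ = ξ := by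
  set xa := ContinuousLinearMap.adjoint x with hxadef
  have h1 : (inner ℂ (xa ξ) ξ : ℂ) = inner ℂ ξ ξ := by
    rw [hxadef, ContinuousLinearMap.adjoint_inner_left x ξ ξ, hξ]
  have h2 : RCLike.re (inner ℂ (xa ξ) ξ : ℂ) = ‖ξ‖ * ‖ξ‖ := by
    rw [h1]; exact inner_self_eq_norm_mul_norm ξ
  have h3 : ‖xa ξ‖ ≤ ‖ξ‖ := by
    calc ‖xa ξ‖ ≤ ‖xa‖ * ‖ξ‖ := ContinuousLinearMap.le_opNorm xa ξ
      _ ≤ 1 * ‖ξ‖ := by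
          apply mul_le_mul_of_nonneg_right _ (norm_nonneg ξ)
          rw [hxadef]
          calc ‖ContinuousLinearMap.adjoint x‖ = ‖x‖ :=
                ContinuousLinearMap.adjoint.norm_map x
            _ ≤ 1 := hnorm
      _ = ‖ξ‖ := one_mul _
  have h4 : ‖xa ξ - ξ‖^2 = ‖xa ξ‖^2 - 2 * RCLike.re (inner ℂ (xa ξ) ξ : ℂ) + ‖ξ‖^2 :=
    norm_sub_sq (xa ξ) ξ
  have h5 : ‖xa ξ - ξ‖^2 ≤ 0 := by
    rw [h4, h2]
    nlinarith [norm_nonneg (xa ξ), norm_nonneg ξ]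
  have h6 : ‖xa ξ - ξ‖ = 0 := by
    nlinarith [norm_nonneg (xa ξ - ξ), sq_nonneg (‖xa ξ - ξ‖)]
  have h7 : xa ξ - ξ = 0 := norm_eq_zero.mp h6
  have h8 := sub_eq_zero.mp h7
  exact h8

end AuxiliaryLemmas

/-- A tracial von Neumann algebra `(M, τ)`, presented concretely: a von Neumann
algebra `M` acting on the Hilbert space `H = L²(M, τ)` together with the cyclic,
separating, tracial unit vector `Ω = 1̂`; the trace is `τ(a) = ⟪aΩ, Ω⟫`. -/
structure TracialVonNeumannAlgebra (H : Type*) [NormedAddCommGroup H]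
    [InnerProductSpace ℂ H] [CompleteSpace H] where
  M : VonNeumannAlgebra H
  Ω : H
  norm_Ω : ‖Ω‖ = 1
  tracial : ∀ a b : H →L[ℂ] H, a ∈ M → b ∈ M →
    (inner ℂ ((a * b) Ω) Ω : ℂ) = (inner ℂ ((b * a) Ω) Ω : ℂ)
  separating : ∀ a : H →L[ℂ] H, a ∈ M → a Ω = 0 → a = 0
  cyclic : Dense {ξ : H | ∃ a ∈ M, a Ω = ξ}

/-- The trace `τ(a) = ⟪aΩ, Ω⟫`. -/
noncomputable def TracialVonNeumannAlgebra.τ {H : Type*} [NormedAddCommGroup H]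
    [InnerProductSpace ℂ H] [CompleteSpace H]
    (T : TracialVonNeumannAlgebra H) (a : H →L[ℂ] H) : ℂ :=
  inner ℂ (a T.Ω) T.Ω

section KeySection

open ContinuousLinearMap

variable {H : Type*} [NormedAddCommGroup H] [InnerProductSpace ℂ H] [CompleteSpace H]

lemma key (T : TracialVonNeumannAlgebra H) (x : H →L[ℂ] H) (hx : x ∈ T.M) (hnorm : ‖x‖ ≤ 1)
    {r : ℝ} (hr1 : (1/2:ℝ) ≤ r) (hr2 : r < 1) (η : H)
    (hη : ((1 : H →L[ℂ] H) - (2:ℂ)⁻¹ • (x + ContinuousLinearMap.adjoint x)) η = T.Ω) :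
    ∃ ξ : H, ((1 : H →L[ℂ] H) - (r:ℂ) • x) ξ = T.Ω ∧ ‖ξ‖ ≤ 4 * ‖η‖ := by
  classical
  have hr0 : (0:ℝ) < r := lt_of_lt_of_le (by norm_num) hr1
  have hstar_half : star (2:ℂ)⁻¹ = (2:ℂ)⁻¹ := by simp
  have hstar_r : star ((r:ℝ):ℂ) = ((r:ℝ):ℂ) := by
    simp [Complex.star_def, Complex.conj_ofReal]
  have hnorm_r : ‖((r:ℝ):ℂ)‖ = r := by
    rw [Complex.norm_real, Real.norm_eq_abs, abs_of_pos hr0]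
  obtain ⟨Ω, hΩdef⟩ : ∃ O : H, O = T.Ω := ⟨T.Ω, rfl⟩
  have tr : ∀ a b : H →L[ℂ] H, a ∈ T.M → b ∈ T.M →
      (inner ℂ ((a * b) Ω) Ω : ℂ) = (inner ℂ ((b * a) Ω) Ω : ℂ) := by
    intro a b ha hb; rw [hΩdef]; exact T.tracial a b ha hb
  obtain ⟨xa, hxadef⟩ : ∃ v : H →L[ℂ] H, v = ContinuousLinearMap.adjoint x :=
    ⟨_, rfl⟩
  have hxa_mem : xa ∈ T.M := by
    rw [hxadef, ← ContinuousLinearMap.star_eq_adjoint]; exact star_mem hx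
  have hxa_norm : ‖xa‖ = ‖x‖ := by
    rw [hxadef]; exact ContinuousLinearMap.adjoint.norm_map x
  obtain ⟨Rex, hRexdef⟩ : ∃ v : H →L[ℂ] H, v = (2:ℂ)⁻¹ • (x + xa) := ⟨_, rfl⟩
  rw [← hxadef, ← hRexdef, ← hΩdef] at hη
  have hRex_mem : Rex ∈ T.M := by
    rw [hRexdef]; exact vna_smul_mem T.M (add_mem hx hxa_mem) _
  have hRex_star : star Rex = Rex := by
    rw [hRexdef, star_smul, star_add, ContinuousLinearMap.star_eq_adjoint,
      ContinuousLinearMap.star_eq_adjoint, hxadef, adjoint_adjoint, hstar_half, add_comm]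
  have hRex_norm : ‖Rex‖ ≤ 1 := by
    rw [hRexdef]
    calc ‖(2:ℂ)⁻¹ • (x + xa)‖ = ‖(2:ℂ)⁻¹‖ * ‖x + xa‖ := norm_smul _ _
      _ ≤ (2:ℝ)⁻¹ * (‖x‖ + ‖xa‖) := by
          have h1 : ‖(2:ℂ)⁻¹‖ = (2:ℝ)⁻¹ := by rw [norm_inv]; norm_num
          rw [h1]; gcongr; exact norm_add_le _ _
      _ ≤ 1 := by rw [hxa_norm]; linarith
  obtain ⟨k, hkdef⟩ : ∃ v : H →L[ℂ] H, v = (r:ℂ) • Rex := ⟨_, rfl⟩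
  have hk_mem : k ∈ T.M := by rw [hkdef]; exact vna_smul_mem T.M hRex_mem _
  have hk_star : star k = k := by rw [hkdef, star_smul, hRex_star, hstar_r]
  have hk_norm : ‖k‖ ≤ r := by
    rw [hkdef, norm_smul, hnorm_r]
    calc r * ‖Rex‖ ≤ r * 1 := by gcongr
      _ = r := mul_one r
  obtain ⟨W, hW_mem, hW_star, hW_sq, hW_near⟩ :=
    exists_sqrt T.M k hk_mem hk_star hr0.le hr2 hk_norm
  obtain ⟨Winv, hWinv_mem, hWWinv, hWinvW⟩ :
      ∃ Wi : H →L[ℂ] H, Wi ∈ T.M ∧ W * Wi = 1 ∧ Wi * W = 1 := by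
    refine ⟨∑' n : ℕ, ((1:H →L[ℂ] H) - W) ^ n,
      tsum_geom_mem T.M (sub_mem (one_mem T.M.toStarSubalgebra) hW_mem) hW_near, ?_, ?_⟩
    · have h := mul_neg_geom_series ((1:H →L[ℂ] H) - W) hW_near
      rwa [sub_sub_cancel] at h
    · have h := geom_series_mul_neg ((1:H →L[ℂ] H) - W) hW_near
      rwa [sub_sub_cancel] at h
  have hWinv_star : star Winv = Winv := by
    have h1 : star Winv * W = 1 := by
      rw [← hW_star, ← star_mul, hWWinv, star_one]
    calc star Winv = star Winv * (W * Winv) := by rw [hWWinv, mul_one]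
      _ = (star Winv * W) * Winv := by rw [mul_assoc]
      _ = Winv := by rw [h1, one_mul]
  obtain ⟨y, hydef⟩ : ∃ v : H →L[ℂ] H, v = 1 - (r:ℂ) • x := ⟨_, rfl⟩
  have hrx_norm : ‖(r:ℂ) • x‖ < 1 := by
    rw [norm_smul, hnorm_r]
    calc r * ‖x‖ ≤ r * 1 := by gcongr
      _ < 1 := by linarith
  obtain ⟨z, hz_mem, hyz, hzy⟩ : ∃ z : H →L[ℂ] H, z ∈ T.M ∧ y * z = 1 ∧ z * y = 1 := by
    refine ⟨∑' n : ℕ, ((r:ℂ) • x) ^ n,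
      tsum_geom_mem T.M (vna_smul_mem T.M hx _) hrx_norm, ?_, ?_⟩
    · rw [hydef]; exact mul_neg_geom_series _ hrx_norm
    · rw [hydef]; exact geom_series_mul_neg _ hrx_norm
  obtain ⟨A, hAdef⟩ : ∃ v : H →L[ℂ] H, v = W * W := ⟨_, rfl⟩
  have hAk : A = 1 - k := by rw [hAdef]; exact hW_sq
  obtain ⟨D, hDdef⟩ : ∃ v : H →L[ℂ] H, v = y - A := ⟨_, rfl⟩
  have hyAD : y = A + D := by rw [hDdef]; abel
  have hD_star : star D = -D := by
    have h1 : star y = 1 - (r:ℂ) • xa := by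
      rw [hydef, star_sub, star_one, star_smul, hstar_r,
        ContinuousLinearMap.star_eq_adjoint, ← hxadef]
    have h2 : star A = A := by rw [hAk, star_sub, star_one, hk_star]
    rw [hDdef, star_sub, h1, h2, hAk, hydef, hkdef, hRexdef]
    module
  obtain ⟨E, hEdef⟩ : ∃ v : H →L[ℂ] H, v = Winv * D * Winv := ⟨_, rfl⟩
  have hE_star : star E = -E := by
    rw [hEdef, star_mul, star_mul, hWinv_star, hD_star]
    simp only [mul_neg, neg_mul]
    rw [mul_assoc]
  obtain ⟨G, hGdef⟩ : ∃ v : H →L[ℂ] H, v = Winv * y * Winv := ⟨_, rfl⟩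
  have hG : G = 1 + E := by
    have h1 : Winv * (A + D) * Winv = (Winv * W) * (W * Winv) + Winv * D * Winv := by
      rw [hAdef]; noncomm_ring
    rw [hGdef, hyAD, h1, hWinvW, hWWinv, one_mul, hEdef]
  have hG_lower : ∀ u : H, ‖u‖ ≤ ‖G u‖ := by
    intro u
    have happ : G u = u + E u := by
      rw [hG]; simp [ContinuousLinearMap.add_apply]
    have hre : RCLike.re (inner ℂ u (E u) : ℂ) = 0 := by
      have ha : (inner ℂ u (E u) : ℂ) = -(inner ℂ (E u) u : ℂ) := by
        calc (inner ℂ u (E u) : ℂ) = inner ℂ ((star E) u) u := (inner_star_left E u u).symm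
          _ = inner ℂ ((-E) u) u := by rw [hE_star]
          _ = -(inner ℂ (E u) u : ℂ) := by
              rw [ContinuousLinearMap.neg_apply, inner_neg_left]
      have hb : (starRingEnd ℂ) (inner ℂ u (E u) : ℂ) = (inner ℂ (E u) u : ℂ) :=
        inner_conj_symm (E u) u
      have h1 : (inner ℂ u (E u) : ℂ) = -(starRingEnd ℂ) (inner ℂ u (E u) : ℂ) := by
        rw [hb]; exact ha
      have h2 : (inner ℂ u (E u) : ℂ) + (starRingEnd ℂ) (inner ℂ u (E u) : ℂ) = 0 := by
        nth_rewrite 1 [h1]; ring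
      rw [RCLike.add_conj] at h2
      rcases mul_eq_zero.mp h2 with h | h
      · norm_num at h
      · rwa [RCLike.ofReal_eq_zero] at h
    have hns : ‖u + E u‖^2 = ‖u‖^2 + 2 * RCLike.re (inner ℂ u (E u) : ℂ) + ‖E u‖^2 :=
      norm_add_sq u (E u)
    have hsq : ‖G u‖^2 = ‖u‖^2 + ‖E u‖^2 := by
      rw [happ, hns, hre]; ring
    nlinarith [norm_nonneg (G u), norm_nonneg u, sq_nonneg (‖E u‖)]
  obtain ⟨V, hVdef⟩ : ∃ v : H →L[ℂ] H, v = W * z * W := ⟨_, rfl⟩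
  have hV_mem : V ∈ T.M := by rw [hVdef]; exact mul_mem (mul_mem hW_mem hz_mem) hW_mem
  have hVG : V * G = 1 := by
    have h1 : V * G = W * z * (W * Winv) * y * Winv := by
      rw [hVdef, hGdef]; noncomm_ring
    rw [h1, hWWinv, mul_one]
    have h2 : W * z * y * Winv = W * (z * y) * Winv := by noncomm_ring
    rw [h2, hzy, mul_one, hWWinv]
  have hGV : G * V = 1 := by
    have h1 : G * V = Winv * y * (Winv * W) * z * W := by
      rw [hVdef, hGdef]; noncomm_ring
    rw [h1, hWinvW, mul_one]
    have h2 : Winv * y * z * W = Winv * (y * z) * W := by noncomm_ring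
    rw [h2, hyz, mul_one, hWinvW]
  have hV_norm : ∀ p : H, ‖V p‖ ≤ ‖p‖ := by
    intro p
    have h1 : ‖G (V p)‖ = ‖p‖ := by
      have e : G (V p) = (G * V) p := rfl
      rw [e, hGV, ContinuousLinearMap.one_apply]
    calc ‖V p‖ ≤ ‖G (V p)‖ := hG_lower (V p)
      _ = ‖p‖ := h1
  have hV_op : ‖V‖ ≤ 1 := by
    apply ContinuousLinearMap.opNorm_le_bound _ zero_le_one
    intro p; rw [one_mul]; exact hV_norm p
  have hVadj_norm : ∀ p : H, ‖(star V) p‖ ≤ ‖p‖ := by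
    intro p
    calc ‖(star V) p‖ ≤ ‖star V‖ * ‖p‖ := ContinuousLinearMap.le_opNorm _ p
      _ ≤ 1 * ‖p‖ := by
          apply mul_le_mul_of_nonneg_right _ (norm_nonneg p)
          rw [ContinuousLinearMap.star_eq_adjoint]
          calc ‖ContinuousLinearMap.adjoint V‖ = ‖V‖ :=
                ContinuousLinearMap.adjoint.norm_map V
            _ ≤ 1 := hV_op
      _ = ‖p‖ := one_mul _
  have hz_fact : z = Winv * V * Winv := by
    have h1 : Winv * (W * z * W) * Winv = (Winv * W) * z * (W * Winv) := by noncomm_ring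
    rw [hVdef, h1, hWinvW, hWWinv, one_mul, mul_one]
  obtain ⟨Cc, hCcdef⟩ : ∃ v : H →L[ℂ] H, v = Winv * Winv := ⟨_, rfl⟩
  have hCc_mem : Cc ∈ T.M := by rw [hCcdef]; exact mul_mem hWinv_mem hWinv_mem
  have hCc_star : star Cc = Cc := by rw [hCcdef, star_mul, hWinv_star]
  have step1 : (inner ℂ (z Ω) (z Ω) : ℂ) = inner ℂ ((star z * z) Ω) Ω := by
    have e : ((star z * z) Ω) = (star z) (z Ω) := rfl
    rw [e, inner_star_left]
  have hstarz : star z = Winv * star V * Winv := by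
    rw [hz_fact, star_mul, star_mul, hWinv_star, mul_assoc]
  have step2 : star z * z = Winv * (star V * Cc * V * Winv) := by
    rw [hstarz]
    nth_rewrite 1 [hz_fact]
    rw [hCcdef]
    noncomm_ring
  have step3 : (inner ℂ ((star z * z) Ω) Ω : ℂ)
      = inner ℂ ((star V * Cc * V * Winv * Winv) Ω) Ω := by
    rw [step2]
    exact tr Winv _ hWinv_mem
      (mul_mem (mul_mem (mul_mem (star_mem hV_mem) hCc_mem) hV_mem) hWinv_mem)
  have step4 : star V * Cc * V * Winv * Winv = star V * (Cc * V * Cc) := by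
    rw [hCcdef]; noncomm_ring
  have step5 : (inner ℂ ((star V * (Cc * V * Cc)) Ω) Ω : ℂ)
      = inner ℂ ((Cc * V * Cc) Ω) (V Ω) := by
    have e : ((star V * (Cc * V * Cc)) Ω) = (star V) ((Cc * V * Cc) Ω) := rfl
    rw [e, inner_star_left]
  have step6 : (inner ℂ ((Cc * V * Cc) Ω) (V Ω) : ℂ) = inner ℂ (V (Cc Ω)) (Cc (V Ω)) := by
    have e : (Cc * V * Cc) Ω = Cc (V (Cc Ω)) := rfl
    rw [e, inner_move Cc hCc_star]
  have main1 : ‖z Ω‖ * ‖z Ω‖ ≤ ‖Cc Ω‖ * ‖Cc (V Ω)‖ := by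
    have h0 : (inner ℂ (z Ω) (z Ω) : ℂ) = inner ℂ (V (Cc Ω)) (Cc (V Ω)) := by
      rw [step1, step3, step4, step5, step6]
    calc ‖z Ω‖ * ‖z Ω‖ = RCLike.re (inner ℂ (z Ω) (z Ω) : ℂ) :=
          (inner_self_eq_norm_mul_norm _).symm
      _ ≤ ‖(inner ℂ (z Ω) (z Ω) : ℂ)‖ := RCLike.re_le_norm _
      _ = ‖(inner ℂ (V (Cc Ω)) (Cc (V Ω)) : ℂ)‖ := by rw [h0]
      _ ≤ ‖V (Cc Ω)‖ * ‖Cc (V Ω)‖ := norm_inner_le_norm _ _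
      _ ≤ ‖Cc Ω‖ * ‖Cc (V Ω)‖ :=
          mul_le_mul_of_nonneg_right (hV_norm _) (norm_nonneg _)
  have main2 : ‖Cc (V Ω)‖ ≤ ‖Cc Ω‖ := by
    have h1 : (inner ℂ ((star (Cc * V) * (Cc * V)) Ω) Ω : ℂ)
        = inner ℂ (Cc (V Ω)) (Cc (V Ω)) := by
      have e : ((star (Cc * V) * (Cc * V)) Ω) = (star (Cc * V)) ((Cc * V) Ω) := rfl
      rw [e, inner_star_left]
      rfl
    have h2 : star (Cc * V) * (Cc * V) = star V * (Cc * Cc * V) := by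
      rw [star_mul, hCc_star]; noncomm_ring
    have h4 : (inner ℂ ((star V * (Cc * Cc * V)) Ω) Ω : ℂ)
        = inner ℂ ((Cc * Cc * V * star V) Ω) Ω :=
      tr (star V) (Cc * Cc * V) (star_mem hV_mem)
        (mul_mem (mul_mem hCc_mem hCc_mem) hV_mem)
    have h6 : Cc * Cc * V * star V = Cc * (Cc * V * star V) := by noncomm_ring
    have h5 : (inner ℂ ((Cc * (Cc * V * star V)) Ω) Ω : ℂ)
        = inner ℂ ((Cc * V * star V * Cc) Ω) Ω :=
      tr Cc (Cc * V * star V) hCc_mem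
        (mul_mem (mul_mem hCc_mem hV_mem) (star_mem hV_mem))
    have h7 : (inner ℂ ((Cc * V * star V * Cc) Ω) Ω : ℂ)
        = inner ℂ ((star V) (Cc Ω)) ((star V) (Cc Ω)) := by
      have e1 : (Cc * V * star V * Cc) Ω = Cc (V ((star V) (Cc Ω))) := rfl
      rw [e1, inner_move Cc hCc_star, inner_move' V]
    have h8 : ‖Cc (V Ω)‖ * ‖Cc (V Ω)‖ = ‖(star V) (Cc Ω)‖ * ‖(star V) (Cc Ω)‖ := by
      have e2 : RCLike.re (inner ℂ (Cc (V Ω)) (Cc (V Ω)) : ℂ)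
          = RCLike.re (inner ℂ ((star V) (Cc Ω)) ((star V) (Cc Ω)) : ℂ) := by
        rw [← h1, h2, h4, h6, h5, h7]
      rw [inner_self_eq_norm_mul_norm, inner_self_eq_norm_mul_norm] at e2
      exact e2
    have h9 : ‖(star V) (Cc Ω)‖ ≤ ‖Cc Ω‖ := hVadj_norm _
    nlinarith [norm_nonneg (Cc (V Ω)), norm_nonneg ((star V) (Cc Ω)), norm_nonneg (Cc Ω)]
  have main3 : ‖z Ω‖ ≤ ‖Cc Ω‖ := by
    nlinarith [norm_nonneg (z Ω), norm_nonneg (Cc Ω), norm_nonneg (Cc (V Ω)), main1, main2]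
  have hCcA : Cc * A = 1 := by
    have h1 : Cc * A = Winv * (Winv * W) * W := by rw [hCcdef, hAdef]; noncomm_ring
    rw [h1, hWinvW, mul_one, hWinvW]
  have hACc : A * Cc = 1 := by
    have h1 : A * Cc = W * (W * Winv) * Winv := by rw [hCcdef, hAdef]; noncomm_ring
    rw [h1, hWWinv, mul_one, hWWinv]
  have hA_lower : ∀ u : H, (1 - r) * ‖u‖ ≤ ‖A u‖ := by
    intro u
    have h1 : A u = u - k u := by rw [hAk]; rfl
    have h2 : (1 - r) * (‖u‖ * ‖u‖) ≤ RCLike.re (inner ℂ (A u) u : ℂ) := by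
      rw [h1, inner_sub_left, map_sub]
      have h3 : RCLike.re (inner ℂ u u : ℂ) = ‖u‖ * ‖u‖ := inner_self_eq_norm_mul_norm u
      have h4 : RCLike.re (inner ℂ (k u) u : ℂ) ≤ r * (‖u‖ * ‖u‖) := by
        calc RCLike.re (inner ℂ (k u) u : ℂ) ≤ ‖(inner ℂ (k u) u : ℂ)‖ := RCLike.re_le_norm _
          _ ≤ ‖k u‖ * ‖u‖ := norm_inner_le_norm _ _
          _ ≤ (r * ‖u‖) * ‖u‖ := by
              apply mul_le_mul_of_nonneg_right _ (norm_nonneg u)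
              calc ‖k u‖ ≤ ‖k‖ * ‖u‖ := ContinuousLinearMap.le_opNorm k u
                _ ≤ r * ‖u‖ := by gcongr
          _ = r * (‖u‖ * ‖u‖) := by ring
      rw [h3]
      nlinarith
    have h5 : RCLike.re (inner ℂ (A u) u : ℂ) ≤ ‖A u‖ * ‖u‖ := by
      calc RCLike.re (inner ℂ (A u) u : ℂ) ≤ ‖(inner ℂ (A u) u : ℂ)‖ := RCLike.re_le_norm _
        _ ≤ ‖A u‖ * ‖u‖ := norm_inner_le_norm _ _
    by_cases hu : ‖u‖ = 0
    · rw [hu, mul_zero]; exact norm_nonneg _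
    · have hu' : 0 < ‖u‖ := lt_of_le_of_ne (norm_nonneg u) (Ne.symm hu)
      have h6 := le_trans h2 h5
      nlinarith
  have hCcη : ‖Cc η‖ ≤ (1 - r)⁻¹ * ‖η‖ := by
    have h1 : A (Cc η) = η := by
      have e : A (Cc η) = (A * Cc) η := rfl
      rw [e, hACc, ContinuousLinearMap.one_apply]
    have h2 : (1 - r) * ‖Cc η‖ ≤ ‖η‖ := by
      have h3 := hA_lower (Cc η); rwa [h1] at h3
    have h1r : (0:ℝ) < 1 - r := by linarith
    rw [inv_mul_eq_div, le_div_iff₀ h1r]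
    linarith [h2]
  have hCcΩ : ‖Cc Ω‖ ≤ 4 * ‖η‖ := by
    have hop : (r:ℂ) • ((1:H →L[ℂ] H) - Rex) = A - ((1-r:ℝ):ℂ) • 1 := by
      rw [hAk, hkdef, Complex.ofReal_sub, Complex.ofReal_one]
      module
    have happ : (r:ℂ) • Ω = A η - ((1-r:ℝ):ℂ) • η := by
      have h0 := congrArg (fun (TT : H →L[ℂ] H) => TT η) hop
      simp only [ContinuousLinearMap.smul_apply, ContinuousLinearMap.sub_apply,
        ContinuousLinearMap.one_apply] at h0
      have hη' : η - Rex η = Ω := hη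
      rw [hη'] at h0
      exact h0
    have h2 : (r:ℂ) • Cc Ω = η - ((1-r:ℝ):ℂ) • Cc η := by
      have h0 := congrArg (fun v : H => Cc v) happ
      simp only [map_smul, map_sub] at h0
      have e : Cc (A η) = η := by
        have e1 : Cc (A η) = (Cc * A) η := rfl
        rw [e1, hCcA, ContinuousLinearMap.one_apply]
      rw [e] at h0
      exact h0
    have h3 : r * ‖Cc Ω‖ ≤ 2 * ‖η‖ := by
      have h4 : ‖(r:ℂ) • Cc Ω‖ = r * ‖Cc Ω‖ := by rw [norm_smul, hnorm_r]
      have h5 : ‖η - ((1-r:ℝ):ℂ) • Cc η‖ ≤ ‖η‖ + (1-r) * ‖Cc η‖ := by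
        calc ‖η - ((1-r:ℝ):ℂ) • Cc η‖ ≤ ‖η‖ + ‖((1-r:ℝ):ℂ) • Cc η‖ := norm_sub_le _ _
          _ = ‖η‖ + (1-r) * ‖Cc η‖ := by
              rw [norm_smul, Complex.norm_real, Real.norm_eq_abs,
                abs_of_pos (by linarith : (0:ℝ) < 1 - r)]
      have h6 : (1-r) * ‖Cc η‖ ≤ ‖η‖ := by
        have h7 : (1-r) * ((1-r)⁻¹ * ‖η‖) = ‖η‖ := by
          rw [← mul_assoc, mul_inv_cancel₀ (by linarith : (1:ℝ)-r ≠ 0), one_mul]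
        calc (1-r) * ‖Cc η‖ ≤ (1-r) * ((1-r)⁻¹ * ‖η‖) :=
              mul_le_mul_of_nonneg_left hCcη (by linarith)
          _ = ‖η‖ := h7
      rw [← h4, h2]
      calc ‖η - ((1-r:ℝ):ℂ) • Cc η‖ ≤ ‖η‖ + (1-r) * ‖Cc η‖ := h5
        _ ≤ 2 * ‖η‖ := by linarith
    nlinarith [norm_nonneg (Cc Ω)]
  refine ⟨z Ω, ?_, le_trans main3 hCcΩ⟩
  rw [← hydef, ← hΩdef]
  have e : y (z Ω) = (y * z) Ω := rfl
  rw [e, hyz, ContinuousLinearMap.one_apply]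

end KeySection

/-- for a contraction `x` in a tracial von Neumann algebra, if
`1 − Re(x)` has an `L²` formal inverse then so does `1 − x`; in particular any
`ξ` with `xξ = ξ` also satisfies `x*ξ = ξ` and `Re(x)ξ = ξ`. -/
theorem formal_inverse_of_real_part_formal_inverse
    {H : Type*} [NormedAddCommGroup H] [InnerProductSpace ℂ H] [CompleteSpace H]
    (T : TracialVonNeumannAlgebra H)
    (x : H →L[ℂ] H) (hx : x ∈ T.M) (hnorm : ‖x‖ ≤ 1) :
    ((∃ ξ : H, ((1 : H →L[ℂ] H) -
        (2 : ℂ)⁻¹ • (x + ContinuousLinearMap.adjoint x)) ξ = T.Ω) →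
      ∃ ξ : H, ((1 : H →L[ℂ] H) - x) ξ = T.Ω) ∧
    (∀ ξ : H, x ξ = ξ → (ContinuousLinearMap.adjoint x) ξ = ξ ∧
      ((2 : ℂ)⁻¹ • (x + ContinuousLinearMap.adjoint x)) ξ = ξ) := by
  constructor
  · rintro ⟨η, hη⟩
    have hbound : ∀ v : H, ‖(inner ℂ T.Ω v : ℂ)‖
        ≤ (4 * ‖η‖) * ‖(ContinuousLinearMap.adjoint ((1 : H →L[ℂ] H) - x)) v‖ := by
      intro v
      apply le_of_forall_pos_le_add
      intro ε hε
      have hδpos : (0:ℝ) < ε / (4 * ‖η‖ * ‖v‖ + 1) := by positivity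
      set δ : ℝ := ε / (4 * ‖η‖ * ‖v‖ + 1) with hδdef
      set r : ℝ := max (1/2) (1 - δ) with hrdef
      have hr1 : (1/2:ℝ) ≤ r := le_max_left _ _
      have hr2 : r < 1 := by
        apply max_lt (by norm_num) (by linarith)
      have h1r : 1 - r ≤ δ := by
        have h := le_max_right (1/2:ℝ) (1 - δ)
        rw [hrdef]
        have h2 : (1 - δ) ≤ max (1/2) (1 - δ) := le_max_right _ _
        linarith
      have h1rpos : (0:ℝ) < 1 - r := by linarith
      obtain ⟨ξr, hξr, hξrn⟩ := key T x hx hnorm hr1 hr2 η hη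
      have hstar_r : star ((r:ℝ):ℂ) = ((r:ℝ):ℂ) := by
        simp [Complex.star_def, Complex.conj_ofReal]
      have hsplit : star ((1 : H →L[ℂ] H) - (r:ℂ) • x)
          = star ((1 : H →L[ℂ] H) - x) + ((1-r:ℝ):ℂ) • star x := by
        rw [star_sub, star_sub, star_one, star_smul, hstar_r, Complex.ofReal_sub,
          Complex.ofReal_one]
        module
      have hv : (inner ℂ T.Ω v : ℂ) = inner ℂ ξr ((star ((1 : H →L[ℂ] H) - x)) v)
          + ((1-r:ℝ):ℂ) * inner ℂ ξr ((star x) v) := by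
        rw [← hξr, inner_move' _ ξr v, hsplit]
        have e : ((star ((1 : H →L[ℂ] H) - x) + ((1-r:ℝ):ℂ) • star x)) v
            = (star ((1 : H →L[ℂ] H) - x)) v + ((1-r:ℝ):ℂ) • ((star x) v) := rfl
        rw [e, inner_add_right, inner_smul_right]
      have hxstarv : ‖(star x) v‖ ≤ ‖v‖ := by
        calc ‖(star x) v‖ ≤ ‖star x‖ * ‖v‖ := ContinuousLinearMap.le_opNorm _ v
          _ ≤ 1 * ‖v‖ := by
              apply mul_le_mul_of_nonneg_right _ (norm_nonneg v)
              rw [ContinuousLinearMap.star_eq_adjoint]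
              calc ‖ContinuousLinearMap.adjoint x‖ = ‖x‖ :=
                    ContinuousLinearMap.adjoint.norm_map x
                _ ≤ 1 := hnorm
          _ = ‖v‖ := one_mul _
      have hcnorm : ‖((1-r:ℝ):ℂ)‖ = 1 - r := by
        rw [Complex.norm_real, Real.norm_eq_abs, abs_of_pos h1rpos]
      have hmain : ‖(inner ℂ T.Ω v : ℂ)‖
          ≤ (4 * ‖η‖) * ‖(star ((1 : H →L[ℂ] H) - x)) v‖ + (1-r) * (4 * ‖η‖ * ‖v‖) := by
        rw [hv]
        calc ‖(inner ℂ ξr ((star ((1 : H →L[ℂ] H) - x)) v) : ℂ)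
              + ((1-r:ℝ):ℂ) * inner ℂ ξr ((star x) v)‖
            ≤ ‖(inner ℂ ξr ((star ((1 : H →L[ℂ] H) - x)) v) : ℂ)‖
              + ‖((1-r:ℝ):ℂ) * (inner ℂ ξr ((star x) v) : ℂ)‖ := norm_add_le _ _
          _ ≤ ‖ξr‖ * ‖(star ((1 : H →L[ℂ] H) - x)) v‖
              + (1-r) * (‖ξr‖ * ‖(star x) v‖) := by
              have p1 : ‖(inner ℂ ξr ((star ((1 : H →L[ℂ] H) - x)) v) : ℂ)‖
                  ≤ ‖ξr‖ * ‖(star ((1 : H →L[ℂ] H) - x)) v‖ := norm_inner_le_norm _ _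
              have p2 : ‖((1-r:ℝ):ℂ) * (inner ℂ ξr ((star x) v) : ℂ)‖
                  = (1-r) * ‖(inner ℂ ξr ((star x) v) : ℂ)‖ := by
                rw [norm_mul, hcnorm]
              have p3 : ‖(inner ℂ ξr ((star x) v) : ℂ)‖ ≤ ‖ξr‖ * ‖(star x) v‖ :=
                norm_inner_le_norm _ _
              rw [p2]
              gcongr
          _ ≤ (4 * ‖η‖) * ‖(star ((1 : H →L[ℂ] H) - x)) v‖ + (1-r) * (4 * ‖η‖ * ‖v‖) := by
              have q1 : ‖ξr‖ * ‖(star ((1 : H →L[ℂ] H) - x)) v‖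
                  ≤ (4 * ‖η‖) * ‖(star ((1 : H →L[ℂ] H) - x)) v‖ :=
                mul_le_mul_of_nonneg_right hξrn (norm_nonneg _)
              have q2 : ‖ξr‖ * ‖(star x) v‖ ≤ 4 * ‖η‖ * ‖v‖ := by
                apply mul_le_mul hξrn hxstarv (norm_nonneg _)
                positivity
              have q3 : (1-r) * (‖ξr‖ * ‖(star x) v‖) ≤ (1-r) * (4 * ‖η‖ * ‖v‖) :=
                mul_le_mul_of_nonneg_left q2 (by linarith)
              linarith
      have hlast : (1-r) * (4 * ‖η‖ * ‖v‖) ≤ ε := by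
        have h9 : (1-r) * (4 * ‖η‖ * ‖v‖) ≤ δ * (4 * ‖η‖ * ‖v‖) := by
          apply mul_le_mul_of_nonneg_right h1r (by positivity)
        have h10 : δ * (4 * ‖η‖ * ‖v‖) ≤ ε := by
          rw [hδdef]
          rw [div_mul_eq_mul_div, div_le_iff₀ (by positivity : (0:ℝ) < 4 * ‖η‖ * ‖v‖ + 1)]
          nlinarith [norm_nonneg η, norm_nonneg v, hε.le]
        linarith
      have hfin : ‖(inner ℂ T.Ω v : ℂ)‖
          ≤ (4 * ‖η‖) * ‖(star ((1 : H →L[ℂ] H) - x)) v‖ + ε := by linarith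
      rwa [ContinuousLinearMap.star_eq_adjoint] at hfin
    obtain ⟨ξ, hh⟩ := exists_preimage_of_bound
      (ContinuousLinearMap.adjoint ((1 : H →L[ℂ] H) - x)) T.Ω (4 * ‖η‖) hbound
    refine ⟨ξ, ?_⟩
    apply ext_inner_right ℂ
    intro v
    calc (inner ℂ (((1 : H →L[ℂ] H) - x) ξ) v : ℂ)
        = inner ℂ ξ ((star ((1 : H →L[ℂ] H) - x)) v) := inner_move' _ ξ v
      _ = inner ℂ ξ ((ContinuousLinearMap.adjoint ((1 : H →L[ℂ] H) - x)) v) := by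
          rw [ContinuousLinearMap.star_eq_adjoint]
      _ = inner ℂ T.Ω v := hh v
  · intro ξ hξ
    have h1 := fixed_adjoint x hnorm ξ hξ
    refine ⟨h1, ?_⟩
    have e : ((2 : ℂ)⁻¹ • (x + ContinuousLinearMap.adjoint x)) ξ
        = (2:ℂ)⁻¹ • (x ξ + (ContinuousLinearMap.adjoint x) ξ) := rfl
    rw [e, hξ, h1, ← two_smul ℂ ξ, smul_smul]
    norm_num
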